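/- Let R be a commutative Noetherian ring of prime characteristic p, let I be an ideal of R, and let z ∈ R. If the image of z in R/P lies in (I·(R/P))* for every minimal prime P of R, then z ∈ I*. -/

import Mathlib

/-- The `q`-th Frobenius power `I^{[q]}` of an ideal `I`: the ideal generated by
`q`-th powers of elements of `I`. -/
def Ideal.frobeniusPower {R : Type*} [CommRing R] (I : Ideal R) (q : ℕ) : Ideal R :=
  Ideal.span ((fun x => x ^ q) '' (I : Set R))

/-- `R°`: the set of elements of `R` not contained in any minimal prime of `R`. -/
def primeComplement (R : Type*) [CommRing R] : Set R :=
  { c | ∀ P ∈ minimalPrimes R, c ∉ P }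

/-- The tight closure `I*` of an ideal `I` in a ring of characteristic `p`:
elements `z` such that `c * z ^ (p ^ e) ∈ I ^ [p ^ e]` for some `c ∈ R°`
and all sufficiently large `e`. -/
def tightClosure (p : ℕ) {R : Type*} [CommRing R] (I : Ideal R) : Set R :=
  { z | ∃ c ∈ primeComplement R, ∃ N : ℕ, ∀ e : ℕ, N ≤ e →
      c * z ^ p ^ e ∈ I.frobeniusPower (p ^ e) }

/-- Tight closure commutes with localization in `R`: for every ideal `I` and
multiplicative set `U`, `I* · R[U⁻¹] = (I · R[U⁻¹])*`. -/
def TightClosureCommutesWithLocalization (p : ℕ) (R : Type*) [CommRing R] : Prop :=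
  ∀ (I : Ideal R) (U : Submonoid R),
    (Ideal.map (algebraMap R (Localization U)) (Ideal.span (tightClosure p I)) :
        Set (Localization U))
      = tightClosure p (Ideal.map (algebraMap R (Localization U)) I)

/-- A ring is F-regular if every ideal is tightly closed, both in the ring itself
and in all of its localizations. -/
def FRegular (p : ℕ) (S : Type*) [CommRing S] : Prop :=
  (∀ I : Ideal S, tightClosure p I = (I : Set S)) ∧
    ∀ (U : Submonoid S) (J : Ideal (Localization U)),
      tightClosure p J = (J : Set (Localization U))

section aux
variable {R : Type*} [CommRing R] (p : ℕ) [Fact p.Prime]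

lemma mem_frobeniusPower_of_mem {I : Ideal R} {x : R} (hx : x ∈ I) (q : ℕ) :
    x ^ q ∈ I.frobeniusPower q :=
  Ideal.subset_span ⟨x, hx, rfl⟩

lemma pow_mem_frobeniusPower [CharP R p] {I : Ideal R} {q f : ℕ} {a : R}
    (ha : a ∈ I.frobeniusPower q) : a ^ p ^ f ∈ I.frobeniusPower (q * p ^ f) := by
  induction ha using Submodule.span_induction with
  | mem x h =>
      obtain ⟨y, hy, rfl⟩ := h
      rw [← pow_mul]
      exact mem_frobeniusPower_of_mem hy _
  | zero =>
      rw [zero_pow (pow_ne_zero _ (Fact.out (p := p.Prime)).ne_zero)]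
      exact zero_mem _
  | add x y hx hy ihx ihy =>
      rw [add_pow_char_pow]
      exact add_mem ihx ihy
  | smul r x hx ih =>
      rw [smul_eq_mul, mul_pow]
      exact Ideal.mul_mem_left _ _ ih

lemma charP_quotient_of_isPrime (P : Ideal R) [CharP R p] (hP : P.IsPrime) :
    CharP (R ⧸ P) p := by
  refine CharP.quotient' p P fun n hn => ?_
  by_cases h : p ∣ n
  · exact (CharP.cast_eq_zero_iff R p n).mpr h
  · exfalso
    have hcop : Nat.Coprime p n := (Nat.Prime.coprime_iff_not_dvd Fact.out).mpr h
    have hb := Nat.gcd_eq_gcd_ab p n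
    rw [hcop] at hb
    apply hP.ne_top
    rw [Ideal.eq_top_iff_one]
    have : (1 : R) = (p : R) * (Nat.gcdA p n : ℤ) + (n : R) * (Nat.gcdB p n : ℤ) := by
      have := congrArg (fun m : ℤ => (m : R)) hb
      push_cast at this ⊢
      simpa using this
    rw [this, CharP.cast_eq_zero R p, zero_mul, zero_add]
    exact Ideal.mul_mem_right _ _ hn

lemma frobeniusPower_map_le {S : Type*} [CommRing S] [CharP S p] (f : R →+* S)
    (I : Ideal R) (e : ℕ) :
    (I.map f).frobeniusPower (p ^ e) ≤ (I.frobeniusPower (p ^ e)).map f := by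
  rw [Ideal.frobeniusPower, Ideal.span_le]
  rintro y ⟨x, hx, rfl⟩
  simp only [SetLike.mem_coe]
  rw [Ideal.map, ← Ideal.submodule_span_eq] at hx
  induction hx using Submodule.span_induction with
  | mem w h =>
      obtain ⟨a, ha, rfl⟩ := h
      rw [← map_pow]
      exact Ideal.mem_map_of_mem f (mem_frobeniusPower_of_mem ha _)
  | zero =>
      rw [zero_pow (pow_ne_zero _ (Fact.out (p := p.Prime)).ne_zero)]
      exact zero_mem _
  | add x y hx hy ihx ihy =>
      rw [add_pow_char_pow]
      exact add_mem ihx ihy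
  | smul r x hx ih =>
      rw [smul_eq_mul, mul_pow]
      exact Ideal.mul_mem_left _ _ ih

end aux

/-- If the image of `z` lies in `(I·(R/P))*` for every minimal prime `P` of `R`,
then `z ∈ I*`. -/
theorem mem_tightClosure_of_mem_tightClosure_quotients
    (p : ℕ) [Fact p.Prime] (R : Type) [CommRing R] [IsNoetherianRing R] [CharP R p]
    (I : Ideal R) (z : R)
    (hz : ∀ P ∈ minimalPrimes R,
      Ideal.Quotient.mk P z ∈ tightClosure p (I.map (Ideal.Quotient.mk P))) :
    z ∈ tightClosure p I := by
  classical
  have hp : p.Prime := Fact.out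
  have hfin := minimalPrimes.finite_of_isNoetherianRing R
  set S : Finset (Ideal R) := hfin.toFinset with hS
  have key : ∀ P : Ideal R, P ∈ minimalPrimes R →
      ∃ d u N, d ∉ P ∧ u ∉ P ∧ (∀ Q ∈ minimalPrimes R, Q ≠ P → u ∈ Q) ∧
        ∀ e, N ≤ e → d * z ^ p ^ e ∈ I.frobeniusPower (p ^ e) ⊔ P := by
    intro P hP
    have hPp : P.IsPrime := hP.1.1
    haveI := charP_quotient_of_isPrime p P hPp
    obtain ⟨c, hc, N, hcN⟩ := hz P hP
    obtain ⟨d, rfl⟩ := Ideal.Quotient.mk_surjective c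
    have hbot : (⊥ : Ideal (R ⧸ P)) ∈ minimalPrimes (R ⧸ P) :=
      ⟨⟨Ideal.bot_prime, le_rfl⟩, fun Q _ _ => bot_le⟩
    have hd : d ∉ P := fun h =>
      hc ⊥ hbot (Ideal.mem_bot.mpr (Ideal.Quotient.eq_zero_iff_mem.mpr h))
    have hu : ∃ u, u ∉ P ∧ ∀ Q ∈ minimalPrimes R, Q ≠ P → u ∈ Q := by
      by_cases hle : (S.erase P).inf id ≤ P
      · obtain ⟨Q, hQ, hQle⟩ := (Ideal.IsPrime.inf_le' hPp).mp hle
        rw [Finset.mem_erase] at hQ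
        have hQm : Q ∈ minimalPrimes R := hfin.mem_toFinset.mp hQ.2
        exact absurd (le_antisymm hQle (hP.2 ⟨hQm.1.1, bot_le⟩ hQle)) hQ.1
      · obtain ⟨u, huT, huP⟩ := SetLike.not_le_iff_exists.mp hle
        exact ⟨u, huP, fun Q hQ hne =>
          Finset.inf_le (f := (id : Ideal R → Ideal R)) (Finset.mem_erase.mpr ⟨hne, hfin.mem_toFinset.mpr hQ⟩) huT⟩
    obtain ⟨u, huP, hu2⟩ := hu
    refine ⟨d, u, N, hd, huP, hu2, fun e he => ?_⟩
    have h2 : Ideal.Quotient.mk P (d * z ^ p ^ e) ∈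
        (I.frobeniusPower (p ^ e)).map (Ideal.Quotient.mk P) :=
      frobeniusPower_map_le p _ I e (by simpa [map_mul, map_pow] using hcN e he)
    rwa [Ideal.mem_quotient_iff_mem_sup] at h2
  choose d u N hd hu hu2 hkey using key
  have hmem : ∀ P : {x // x ∈ S}, (P : Ideal R) ∈ minimalPrimes R :=
    fun P => hfin.mem_toFinset.mp P.2
  set c' : R := ∑ P ∈ S.attach, u P (hmem P) * d P (hmem P) with hc'
  set Nm : ℕ := S.attach.sup (fun P => N P (hmem P)) with hNm
  have key1 : ∀ P0 ∈ minimalPrimes R, c' ∉ P0 := by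
    intro P0 hP0 hc0
    have hP0S : P0 ∈ S := hfin.mem_toFinset.mpr hP0
    set P0' : {x // x ∈ S} := ⟨P0, hP0S⟩ with hP0'
    have hrest : ∑ Q ∈ S.attach.erase P0', u Q (hmem Q) * d Q (hmem Q) ∈ P0 := by
      refine Ideal.sum_mem _ fun Q hQ => ?_
      rw [Finset.mem_erase] at hQ
      exact Ideal.mul_mem_right _ _
        (hu2 Q (hmem Q) P0 hP0 (fun h => hQ.1 (Subtype.ext h.symm)))
    have hUD : u P0' (hmem P0') * d P0' (hmem P0') ∈ P0 := by
      have hsub := Ideal.sub_mem _ hc0 hrest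
      rwa [hc', ← Finset.add_sum_erase _ _ (Finset.mem_attach S P0'),
        add_sub_cancel_right] at hsub
    rcases hP0.1.1.mem_or_mem hUD with h | h
    · exact hu P0' (hmem P0') h
    · exact hd P0' (hmem P0') h
  have key2 : ∀ e, Nm ≤ e → c' * z ^ p ^ e ∈ I.frobeniusPower (p ^ e) ⊔ nilradical R := by
    intro e he
    rw [hNm] at he
    rw [hc', Finset.sum_mul]
    refine Ideal.sum_mem _ fun Q _ => ?_
    have hNe : N Q (hmem Q) ≤ e := le_trans (Finset.le_sup (f := fun P : {x // x ∈ S} => N (P : Ideal R) (hmem P)) (Finset.mem_attach S Q)) he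
    obtain ⟨a, ha, b, hb, hab⟩ := Submodule.mem_sup.mp (hkey Q (hmem Q) e hNe)
    rw [mul_assoc, ← hab, mul_add]
    refine Submodule.add_mem_sup (Ideal.mul_mem_left _ _ ha) ?_
    rw [nilradical_eq_sInf, Submodule.mem_sInf]
    intro J hJ
    haveI : Ideal.IsPrime J := hJ
    obtain ⟨Q', hQ', hQ'le⟩ := Ideal.exists_minimalPrimes_le (bot_le : ⊥ ≤ J)
    apply hQ'le
    by_cases hqq : Q' = (Q : Ideal R)
    · rw [hqq]; exact Ideal.mul_mem_left _ _ hb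
    · exact Ideal.mul_mem_right _ _ (hu2 Q (hmem Q) Q' hQ' hqq)
  obtain ⟨k, hk⟩ := IsNoetherianRing.isNilpotent_nilradical R
  have hnilz : ∀ n ∈ nilradical R, n ^ p ^ k = 0 := by
    intro n hn
    have hnk : n ^ k = 0 := by
      have h := Ideal.pow_mem_pow hn k
      rw [hk] at h
      simpa using h
    have hkle : k ≤ p ^ k := (Nat.lt_pow_self hp.one_lt : k < p ^ k).le
    calc n ^ p ^ k = n ^ k * n ^ (p ^ k - k) := by
          rw [← pow_add, Nat.add_sub_cancel' hkle]
      _ = 0 := by rw [hnk, zero_mul]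
  refine ⟨c' ^ p ^ k, fun P hP hmem' => key1 P hP (hP.1.1.mem_of_pow_mem _ hmem'),
    Nm + k, fun e he => ?_⟩
  have he' : Nm ≤ e - k := by omega
  obtain ⟨a, ha, n, hn, han⟩ := Submodule.mem_sup.mp (key2 (e - k) he')
  have hek : e - k + k = e := by omega
  have hrw : c' ^ p ^ k * z ^ p ^ e = (c' * z ^ p ^ (e - k)) ^ p ^ k := by
    rw [mul_pow, ← pow_mul, ← pow_add, hek]
  rw [hrw, ← han, add_pow_char_pow, hnilz n hn, add_zero]
  have h := pow_mem_frobeniusPower p (f := k) ha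
  rwa [← pow_add, hek] at h
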